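/- For n ≥ 1, det((C(2i, i-j)·x² + C(2i+2, i+1-j))_{i,j=0}^{n-1}) = L_{2n}(x), where L_m(x) is the m-th Lucas polynomial. -/

import Mathlib

/-- Generalized binomial coefficient `C(a,b)` for integer `a`, with `C(a,b) = 0` for `b < 0`. -/
noncomputable def gchoose (a b : ℤ) : ℤ :=
  if 0 ≤ b then Ring.choose a b.toNat else 0

/-- Fibonacci polynomials `F_m(x) = ∑_{k=0}^{⌊m/2⌋} C(m-k,k) x^{m-2k}`. -/
noncomputable def fibP (m : ℕ) (x : ℝ) : ℝ :=
  ∑ k ∈ Finset.range (m / 2 + 1), (Nat.choose (m - k) k : ℝ) * x ^ (m - 2 * k)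

/-- Lucas polynomials `L_m(x) = ∑_{k=0}^{⌊m/2⌋} (m/(m-k)) C(m-k,k) x^{m-2k}`, `L_0 = 2`. -/
noncomputable def lucasP (m : ℕ) (x : ℝ) : ℝ :=
  if m = 0 then 2
  else ∑ k ∈ Finset.range (m / 2 + 1),
    ((m : ℝ) / ((m - k : ℕ) : ℝ)) * (Nat.choose (m - k) k : ℝ) * x ^ (m - 2 * k)


def ell (m k : ℕ) : ℤ := ((m+k).choose (2*k) : ℤ) + ((m+k-1).choose (2*k) : ℤ)

def bb (k : ℕ) (j : ℤ) : ℤ :=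
  if 0 ≤ (k:ℤ) - j then ((2*k).choose ((k:ℤ)-j).toNat : ℤ) else 0

lemma bb_eq_zero (k : ℕ) (j : ℤ) (h : (k:ℤ) < j ∨ j < -(k:ℤ)) : bb k j = 0 := by
  unfold bb
  split_ifs with h1
  · have : (2*k : ℕ) < ((k:ℤ)-j).toNat := by omega
    simp [Nat.choose_eq_zero_of_lt this]
  · rfl

lemma bb_symm (k : ℕ) (j : ℤ) : bb k j = bb k (-j) := by
  rcases le_or_gt j (-(k:ℤ)) with h | h
  · rcases eq_or_lt_of_le h with h | h
    · subst h
      unfold bb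
      rw [if_pos (by omega), if_pos (by omega)]
      rw [show ((k:ℤ) - -(k:ℤ)).toNat = 2*k by omega, show ((k:ℤ) - -(-(k:ℤ))).toNat = 0 by omega]
      simp
    · rw [bb_eq_zero k j (Or.inr h), bb_eq_zero k (-j) (Or.inl (by omega))]
  rcases le_or_gt j (k:ℤ) with h2 | h2
  · unfold bb
    rw [if_pos (by omega), if_pos (by omega)]
    congr 1
    have hle : ((k:ℤ)- -j).toNat ≤ 2*k := by omega
    have : ((k:ℤ)-j).toNat = 2*k - ((k:ℤ)- -j).toNat := by omega
    rw [this, Nat.choose_symm hle]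
  · rw [bb_eq_zero k j (Or.inl h2), bb_eq_zero k (-j) (Or.inr (by omega))]


lemma bb_pascal_nonneg (k : ℕ) (j : ℤ) (hj : 0 ≤ j) :
    bb (k+1) j = bb k (j-1) + 2 * bb k j + bb k (j+1) := by
  rcases lt_or_ge (k:ℤ) j with h | h
  · -- j ≥ k+1
    rcases eq_or_lt_of_le (by omega : (k:ℤ)+1 ≤ j) with h1 | h1
    · -- j = k+1
      rw [bb_eq_zero k j (Or.inl h), bb_eq_zero k (j+1) (Or.inl (by omega))]
      unfold bb
      rw [if_pos (by omega), if_pos (by omega)]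
      push_cast
      rw [show ((k:ℤ)+1-j).toNat = 0 by omega, show ((k:ℤ)-(j-1)).toNat = 0 by omega]
      simp
    · rw [bb_eq_zero (k+1) j (Or.inl (by push_cast; omega)),
        bb_eq_zero k j (Or.inl h), bb_eq_zero k (j+1) (Or.inl (by omega)),
        bb_eq_zero k (j-1) (Or.inl (by omega))]
      ring
  rcases eq_or_lt_of_le h with h1 | h1
  · -- j = k
    subst h1
    rw [bb_eq_zero k ((k:ℤ)+1) (Or.inl (by omega))]
    unfold bb
    rw [if_pos (by omega), if_pos (by omega), if_pos (by omega)]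
    push_cast
    rw [show ((k:ℤ)+1-(k:ℤ)).toNat = 1 by omega, show ((k:ℤ)-((k:ℤ)-1)).toNat = 1 by omega,
      show ((k:ℤ)-(k:ℤ)).toNat = 0 by omega]
    simp [Nat.choose_one_right]
    push_cast
    ring
  · -- 0 ≤ j ≤ k-1
    unfold bb
    rw [if_pos (by omega), if_pos (by omega), if_pos (by omega), if_pos (by omega)]
    obtain ⟨s, hs⟩ : ∃ s : ℕ, (k:ℤ) - j = (s:ℤ) + 1 := ⟨((k:ℤ)-j-1).toNat, by omega⟩
    push_cast
    rw [show ((k:ℤ)+1-j).toNat = s+2 by omega, show ((k:ℤ)-(j-1)).toNat = s+2 by omega,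
      show ((k:ℤ)-j).toNat = s+1 by omega, show ((k:ℤ)-(j+1)).toNat = s by omega]
    rw [show 2*(k+1) = (2*k+1)+1 by ring, Nat.choose_succ_succ (2*k+1) (s+1),
      show 2*k+1 = (2*k)+1 by rfl, Nat.choose_succ_succ (2*k) s, Nat.choose_succ_succ (2*k) (s+1)]
    push_cast
    ring

lemma bb_pascal (k : ℕ) (j : ℤ) :
    bb (k+1) j = bb k (j-1) + 2 * bb k j + bb k (j+1) := by
  rcases le_or_gt 0 j with hj | hj
  · exact bb_pascal_nonneg k j hj
  · have := bb_pascal_nonneg k (-j) (by omega)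
    rw [← bb_symm, show -j - 1 = -(j+1) by ring, ← bb_symm, show -j + 1 = -(j-1) by ring,
      ← bb_symm, ← bb_symm] at this
    linarith


lemma ell_zero (m : ℕ) : ell m 0 = 2 := by unfold ell; simp

lemma ell_eq_zero (m k : ℕ) (h : m < k) : ell m k = 0 := by
  unfold ell
  rw [Nat.choose_eq_zero_of_lt (by omega), Nat.choose_eq_zero_of_lt (by omega)]
  simp

lemma ell_diag (m : ℕ) (h : 1 ≤ m) : ell m m = 1 := by
  unfold ell
  rw [show m + m = 2*m by ring, Nat.choose_self, Nat.choose_eq_zero_of_lt (by omega)]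
  simp

lemma ell_rec (m k : ℕ) :
    ell (m+2) (k+1) = ell (m+1) k + 2 * ell (m+1) (k+1) - ell m (k+1) := by
  have PA : (m+k+3).choose (2*k+2) = (m+k+2).choose (2*k+1) + (m+k+2).choose (2*k+2) := by
    rw [show m+k+3 = m+k+2+1 by omega, show 2*k+2 = 2*k+1+1 by omega]
    exact Nat.choose_succ_succ _ _
  have PB : (m+k+2).choose (2*k+2) = (m+k+1).choose (2*k+1) + (m+k+1).choose (2*k+2) := by
    rw [show m+k+2 = m+k+1+1 by omega, show 2*k+2 = 2*k+1+1 by omega]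
    exact Nat.choose_succ_succ _ _
  have P1 : (m+k+2).choose (2*k+1) = (m+k+1).choose (2*k) + (m+k+1).choose (2*k+1) := by
    rw [show m+k+2 = m+k+1+1 by omega, show 2*k+1 = 2*k+1 by omega]
    exact Nat.choose_succ_succ _ _
  have P3 : (m+k+1).choose (2*k+1) = (m+k).choose (2*k) + (m+k).choose (2*k+1) := by
    rw [show m+k+1 = m+k+1 by omega]
    exact Nat.choose_succ_succ _ _
  have P4 : (m+k+1).choose (2*k+2) = (m+k).choose (2*k+1) + (m+k).choose (2*k+2) := by
    rw [show 2*k+2 = 2*k+1+1 by omega]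
    exact Nat.choose_succ_succ _ _
  unfold ell
  rw [show m+2+(k+1)-1 = m+k+2 by omega, show m+2+(k+1) = m+k+3 by omega,
    show m+1+(k+1)-1 = m+k+1 by omega, show m+1+(k+1) = m+k+2 by omega,
    show m+1+k-1 = m+k by omega, show m+1+k = m+k+1 by omega,
    show m+(k+1)-1 = m+k by omega, show m+(k+1) = m+k+1 by omega,
    show 2*(k+1) = 2*k+2 by omega]
  rw [PA, PB, P1, P3, P4]
  push_cast
  ring

def Ssum (m : ℕ) (j : ℤ) : ℤ := ∑ k ∈ Finset.range (m+1), (-1)^k * ell m k * bb k j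
def Tsum (m : ℕ) (j : ℤ) : ℤ := ∑ k ∈ Finset.range (m+1), (-1)^k * ell m k * bb (k+1) j

lemma Tsum_eq (m : ℕ) (j : ℤ) :
    Tsum m j = 2*Ssum m j + Ssum m (j-1) + Ssum m (j+1) := by
  unfold Tsum Ssum
  rw [Finset.mul_sum, ← Finset.sum_add_distrib, ← Finset.sum_add_distrib]
  refine Finset.sum_congr rfl fun k _ => ?_
  rw [bb_pascal]
  ring

lemma bb_zero_left (j : ℤ) : bb 0 j = if j = 0 then 1 else 0 := by
  unfold bb
  split_ifs with h1 h2 h3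
  · subst h2; simp
  · rw [show ((0:ℕ):ℤ) - j = -j by simp]
    rw [Nat.choose_eq_zero_of_lt (by omega)]
    simp
  · omega
  · rfl

lemma shift_sum (p N : ℕ) (hN : p ≤ N) (j : ℤ) :
    ∑ k ∈ Finset.range N, (-1:ℤ)^(k+1) * ell p (k+1) * bb (k+1) j
      = Ssum p j - 2 * bb 0 j := by
  have h1 : ∑ k ∈ Finset.range N, (-1:ℤ)^(k+1) * ell p (k+1) * bb (k+1) j
      = ∑ k ∈ Finset.range p, (-1:ℤ)^(k+1) * ell p (k+1) * bb (k+1) j := by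
    refine (Finset.sum_subset (Finset.range_subset_range.2 hN) fun k _ hk => ?_).symm
    rw [ell_eq_zero p (k+1) (by simp at hk; omega)]
    ring
  rw [h1]
  unfold Ssum
  rw [Finset.sum_range_succ' (fun k => (-1:ℤ)^k * ell p k * bb k j) p]
  rw [ell_zero]
  ring

lemma Ssum_rec (m : ℕ) (j : ℤ) :
    Ssum (m+2) j = -Ssum (m+1) (j-1) - Ssum (m+1) (j+1) - Ssum m j := by
  have key : ∀ k ∈ Finset.range (m+2),
      (-1:ℤ)^(k+1) * ell (m+2) (k+1) * bb (k+1) j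
        = -((-1)^k * ell (m+1) k * bb (k+1) j)
          + (2*((-1)^(k+1) * ell (m+1) (k+1) * bb (k+1) j)
          - ((-1)^(k+1) * ell m (k+1) * bb (k+1) j)) := by
    intro k _
    rw [ell_rec]
    ring
  have e1 : ∑ k ∈ Finset.range (m+2), -((-1:ℤ)^k * ell (m+1) k * bb (k+1) j)
      = -(Tsum (m+1) j) := by
    unfold Tsum
    exact Finset.sum_neg_distrib (f := fun k => (-1:ℤ)^k * ell (m+1) k * bb (k+1) j)
  have e2 : ∑ k ∈ Finset.range (m+2), 2*((-1:ℤ)^(k+1) * ell (m+1) (k+1) * bb (k+1) j)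
      = 2 * (Ssum (m+1) j - 2 * bb 0 j) := by
    rw [← Finset.mul_sum, shift_sum (m+1) (m+2) (by omega)]
  have e3 : ∑ k ∈ Finset.range (m+2), (-1:ℤ)^(k+1) * ell m (k+1) * bb (k+1) j
      = Ssum m j - 2 * bb 0 j := shift_sum m (m+2) (by omega) j
  have L1 : Ssum (m+2) j
      = (∑ k ∈ Finset.range (m+2), (-1:ℤ)^(k+1) * ell (m+2) (k+1) * bb (k+1) j)
        + 2 * bb 0 j := by
    unfold Ssum
    rw [Finset.sum_range_succ' (fun k => (-1:ℤ)^k * ell (m+2) k * bb k j) (m+2), ell_zero]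
    ring
  rw [L1, Finset.sum_congr rfl key, Finset.sum_add_distrib, Finset.sum_sub_distrib,
    e1, e2, e3, Tsum_eq]
  ring

lemma Ssum_zero (j : ℤ) : Ssum 0 j = if j = 0 then 2 else 0 := by
  unfold Ssum
  rw [Finset.sum_range_one, bb_zero_left, ell_zero]
  split_ifs <;> ring

lemma bb_val (k : ℕ) (j : ℤ) (h : 0 ≤ (k:ℤ) - j) :
    bb k j = ((2*k).choose ((k:ℤ)-j).toNat : ℤ) := if_pos h

lemma bb_one (j : ℤ) : bb 1 j = if j = 0 then 2 else if j = 1 ∨ j = -1 then 1 else 0 := by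
  rcases lt_trichotomy j (-1) with h | h | h
  · rw [bb_eq_zero 1 j (Or.inr (by push_cast; omega)), if_neg (by omega), if_neg (by omega)]
  · subst h
    rw [bb_val 1 (-1) (by norm_num), show ((1:ℕ):ℤ) - (-1) = 2 by norm_num,
      show ((2:ℤ)).toNat = 2 from rfl]
    norm_num
  · rcases lt_trichotomy j 1 with h2 | h2 | h2
    · have : j = 0 := by omega
      subst this
      rw [bb_val 1 0 (by norm_num), show ((1:ℕ):ℤ) - 0 = 1 by norm_num,
        show ((1:ℤ)).toNat = 1 from rfl]
      norm_num
    · subst h2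
      rw [bb_val 1 1 (by norm_num), show ((1:ℕ):ℤ) - 1 = 0 by norm_num,
        show ((0:ℤ)).toNat = 0 from rfl]
      norm_num
    · rw [bb_eq_zero 1 j (Or.inl (by push_cast; omega)), if_neg (by omega), if_neg (by omega)]

lemma ell_one_zero : ell 1 0 = 2 := ell_zero 1
lemma ell_one_one : ell 1 1 = 1 := ell_diag 1 (le_refl 1)

lemma Ssum_one (j : ℤ) : Ssum 1 j = if j = 1 ∨ j = -1 then -1 else 0 := by
  unfold Ssum
  rw [Finset.sum_range_succ, Finset.sum_range_one, bb_zero_left, bb_one,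
    ell_one_zero, ell_one_one]
  split_ifs <;> first | ring1 | (exfalso; omega)

lemma Ssum_eq : ∀ (m : ℕ) (j : ℤ),
    Ssum (m+1) j = if j = (m:ℤ)+1 ∨ j = -((m:ℤ)+1) then (-1)^(m+1) else 0 := by
  intro m
  induction m using Nat.strong_induction_on with
  | _ m ih =>
    match m with
    | 0 => intro j; simpa using Ssum_one j
    | 1 =>
      intro j
      have h0 := Ssum_rec 0 j
      norm_num at h0
      rw [show (1:ℕ)+1 = 2 from rfl, h0, Ssum_one, Ssum_one, Ssum_zero]
      push_cast
      split_ifs <;> first | ring1 | (exfalso; omega)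
    | (q+2) =>
      intro j
      rw [show q+2+1 = q+1+2 by omega, Ssum_rec (q+1) j,
        ih (q+1) (by omega), ih (q+1) (by omega), ih q (by omega)]
      push_cast
      split_ifs <;> first | ring1 | (exfalso; omega)



lemma gchoose_eq_bb (k : ℕ) (j : ℤ) : gchoose (2*(k:ℤ)) ((k:ℤ) - j) = bb k j := by
  unfold gchoose bb
  split_ifs with h
  · rw [show (2*(k:ℤ)) = ((2*k : ℕ) : ℤ) by push_cast; ring, Ring.choose_natCast]
  · rfl

lemma gchoose_eq_bb' (k : ℕ) (j : ℤ) : gchoose (2*(k:ℤ)+2) ((k:ℤ)+1-j) = bb (k+1) j := by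
  have := gchoose_eq_bb (k+1) j
  rw [show ((k+1:ℕ):ℤ) = (k:ℤ)+1 by push_cast; ring] at this
  rw [← this]
  ring_nf



noncomputable def LL (x : ℝ) (m : ℕ) : ℝ := ∑ k ∈ Finset.range (m+1), (ell m k : ℝ) * x^(2*k)

lemma choose_key (n k : ℕ) (hn : 1 ≤ n) (hk : k ≤ n) :
    2*n * ((n+k).choose (n-k)) = (n+k) * (((n+k).choose (2*k)) + ((n+k-1).choose (2*k))) := by
  have h1 : (n+k).choose (n-k) = (n+k).choose (2*k) := by
    rw [show n - k = (n+k) - 2*k by omega]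
    exact Nat.choose_symm (by omega)
  have h2 : (n+k-1).choose (2*k) * (n+k) = (n+k).choose (2*k) * (n-k) := by
    have := Nat.choose_mul_succ_eq (n+k-1) (2*k)
    rw [show n+k-1+1 = n+k by omega] at this
    rw [this]
    congr 1
    omega
  zify [hk] at h1 h2 ⊢
  linear_combination (2*(n:ℤ)) * h1 - h2

lemma lucasP_eq_LL (n : ℕ) (hn : 1 ≤ n) (x : ℝ) : lucasP (2*n) x = LL x n := by
  unfold lucasP LL
  rw [if_neg (by omega)]
  rw [show 2*n/2 + 1 = n+1 by omega]
  rw [← Finset.sum_range_reflect]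
  refine Finset.sum_congr rfl fun k hk => ?_
  simp only [Finset.mem_range] at hk
  have hk' : k ≤ n := by omega
  rw [show n + 1 - 1 - k = n - k by omega, show 2*n - (n-k) = n+k by omega,
    show 2*n - 2*(n-k) = 2*k by omega]
  have hnz : ((n+k : ℕ) : ℝ) ≠ 0 := by positivity
  have key := choose_key n k hn hk'
  have keyR : (2*n : ℝ) * ((n+k).choose (n-k) : ℝ)
      = ((n+k : ℕ) : ℝ) * (ell n k : ℝ) := by
    unfold ell
    exact_mod_cast congrArg (Nat.cast : ℕ → ℝ) key
  field_simp
  push_cast at keyR ⊢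
  linear_combination x^(2*k) * keyR

lemma shift_sumL (x : ℝ) (p N : ℕ) (hN : p ≤ N) :
    ∑ k ∈ Finset.range N, (ell p (k+1) : ℝ) * x^(2*(k+1)) = LL x p - (ell p 0 : ℝ) := by
  have h1 : ∑ k ∈ Finset.range N, (ell p (k+1) : ℝ) * x^(2*(k+1))
      = ∑ k ∈ Finset.range p, (ell p (k+1) : ℝ) * x^(2*(k+1)) := by
    refine (Finset.sum_subset (Finset.range_subset_range.2 hN) fun k _ hk => ?_).symm
    rw [ell_eq_zero p (k+1) (by simp at hk; omega)]
    simp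
  rw [h1]
  unfold LL
  rw [Finset.sum_range_succ' (fun k => (ell p k : ℝ) * x^(2*k)) p]
  simp

lemma LL_rec (x : ℝ) (m : ℕ) : LL x (m+2) = (x^2+2) * LL x (m+1) - LL x m := by
  have key : ∀ k ∈ Finset.range (m+2), (ell (m+2) (k+1) : ℝ) * x^(2*(k+1))
      = (ell (m+1) k : ℝ) * x^(2*k) * x^2
        + (2*((ell (m+1) (k+1) : ℝ) * x^(2*(k+1))) - (ell m (k+1) : ℝ) * x^(2*(k+1))) := by
    intro k _
    rw [ell_rec]
    push_cast
    ring
  have L1 : LL x (m+2)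
      = (∑ k ∈ Finset.range (m+2), (ell (m+2) (k+1) : ℝ) * x^(2*(k+1))) + 2 := by
    unfold LL
    rw [Finset.sum_range_succ' (fun k => (ell (m+2) k : ℝ) * x^(2*k)) (m+2), ell_zero]
    norm_num
  rw [L1, Finset.sum_congr rfl key, Finset.sum_add_distrib, Finset.sum_sub_distrib,
    ← Finset.sum_mul, ← Finset.mul_sum, shift_sumL x (m+1) (m+2) (by omega),
    shift_sumL x m (m+2) (by omega), ell_zero, ell_zero]
  have : ∑ k ∈ Finset.range (m+2), (ell (m+1) k : ℝ) * x^(2*k) = LL x (m+1) := rfl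
  rw [this]
  push_cast
  ring

noncomputable def Bf (x : ℝ) (i j : ℕ) : ℝ :=
  (if j = i then x^2 + 2 else 0) + (if j = i+1 then 1 else 0)
  + (if j+1 = i then 1 else 0) + (if i = 1 ∧ j = 0 then 1 else 0)

noncomputable def Bmat (x : ℝ) (n : ℕ) : Matrix (Fin n) (Fin n) ℝ :=
  Matrix.of fun i j => Bf x i j

noncomputable def Lmat (n : ℕ) : Matrix (Fin n) (Fin n) ℝ :=
  Matrix.of fun i k => if (i:ℕ) = 0 then (if (k:ℕ) = 0 then 1 else 0)
    else (-1:ℝ)^((i:ℕ)+(k:ℕ)) * (ell i k : ℝ)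

noncomputable def Mmat (x : ℝ) (n : ℕ) : Matrix (Fin n) (Fin n) ℝ :=
  Matrix.of fun i j : Fin n =>
    (gchoose (2 * (i : ℤ)) ((i : ℤ) - (j : ℤ)) : ℝ) * x ^ 2 +
    (gchoose (2 * (i : ℤ) + 2) ((i : ℤ) + 1 - (j : ℤ)) : ℝ)

lemma Lmat_det (n : ℕ) : (Lmat n).det = 1 := by
  rw [Matrix.det_of_lowerTriangular (Lmat n)]
  · rw [Finset.prod_eq_one]
    intro i _
    unfold Lmat
    simp only [Matrix.of_apply]
    split_ifs with h
    · simp [h]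
    · rw [ell_diag i (by omega), Even.neg_one_pow ⟨(i:ℕ), by ring⟩]
      norm_num
  · intro i j hij
    unfold Lmat
    simp only [Matrix.of_apply]
    have hij' : (i:ℕ) < (j:ℕ) := hij
    split_ifs with h h2
    · omega
    · rfl
    · rw [ell_eq_zero i j (by omega)]
      norm_num

lemma Mmat_apply (x : ℝ) (n : ℕ) (i j : Fin n) :
    Mmat x n i j = (bb (i:ℕ) ((j:ℕ):ℤ) : ℝ) * x^2 + (bb ((i:ℕ)+1) ((j:ℕ):ℤ) : ℝ) := by
  unfold Mmat
  simp only [Matrix.of_apply]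
  rw [← gchoose_eq_bb, ← gchoose_eq_bb']

lemma prod_eq (x : ℝ) (n : ℕ) : Lmat n * Mmat x n = Bmat x n := by
  ext i j
  rw [Matrix.mul_apply]
  rcases Nat.eq_zero_or_pos (i:ℕ) with hi | hi
  · -- row 0
    have h0 : (0:ℕ) < n := lt_of_le_of_lt (Nat.zero_le _) i.isLt
    have hL : ∀ k : Fin n, Lmat n i k = if (k:ℕ) = 0 then 1 else 0 := by
      intro k
      unfold Lmat
      simp only [Matrix.of_apply]
      rw [if_pos hi]
    rw [Finset.sum_congr rfl (fun k _ => by rw [hL k])]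
    rw [Finset.sum_eq_single (⟨0, h0⟩ : Fin n)]
    · have hv : ((⟨0, h0⟩ : Fin n) : ℕ) = 0 := rfl
      rw [Mmat_apply]
      rw [hv, if_pos rfl, one_mul]
      rw [bb_zero_left, bb_one]
      unfold Bmat Bf
      simp only [Matrix.of_apply]
      rw [hi]
      push_cast
      split_ifs <;> first | ring1 | (exfalso; first | omega | simp_all | (push_cast at *; omega))
    · intro k _ hk
      have : (k:ℕ) ≠ 0 := fun hc => hk (Fin.ext (by rw [hc]))
      rw [if_neg this, zero_mul]
    · intro h
      exact absurd (Finset.mem_univ _) h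
  · -- row i ≥ 1
    obtain ⟨s, hs⟩ : ∃ s, (i:ℕ) = s + 1 := ⟨(i:ℕ)-1, by omega⟩
    have hsum : ∑ k : Fin n, Lmat n i k * Mmat x n k j
        = ∑ k ∈ Finset.range n,
            (-1:ℝ)^((i:ℕ)+k) * (ell (i:ℕ) k : ℝ)
              * ((bb k ((j:ℕ):ℤ) : ℝ) * x^2 + (bb (k+1) ((j:ℕ):ℤ) : ℝ)) := by
      rw [← Fin.sum_univ_eq_sum_range
        (fun k => (-1:ℝ)^((i:ℕ)+k) * (ell (i:ℕ) k : ℝ)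
          * ((bb k ((j:ℕ):ℤ) : ℝ) * x^2 + (bb (k+1) ((j:ℕ):ℤ) : ℝ))) n]
      refine Finset.sum_congr rfl fun k _ => ?_
      rw [Mmat_apply]
      unfold Lmat
      simp only [Matrix.of_apply]
      rw [if_neg (by omega)]
    rw [hsum]
    have htrunc : ∑ k ∈ Finset.range n,
            (-1:ℝ)^((i:ℕ)+k) * (ell (i:ℕ) k : ℝ)
              * ((bb k ((j:ℕ):ℤ) : ℝ) * x^2 + (bb (k+1) ((j:ℕ):ℤ) : ℝ))
        = ∑ k ∈ Finset.range ((i:ℕ)+1),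
            (-1:ℝ)^((i:ℕ)+k) * (ell (i:ℕ) k : ℝ)
              * ((bb k ((j:ℕ):ℤ) : ℝ) * x^2 + (bb (k+1) ((j:ℕ):ℤ) : ℝ)) := by
      refine (Finset.sum_subset (Finset.range_subset_range.2 i.isLt) fun k _ hk => ?_).symm
      rw [ell_eq_zero (i:ℕ) k (by simp at hk; omega)]
      norm_num
    rw [htrunc]
    have hexp : ∑ k ∈ Finset.range ((i:ℕ)+1),
            (-1:ℝ)^((i:ℕ)+k) * (ell (i:ℕ) k : ℝ)
              * ((bb k ((j:ℕ):ℤ) : ℝ) * x^2 + (bb (k+1) ((j:ℕ):ℤ) : ℝ))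
        = (-1:ℝ)^((i:ℕ)) * (x^2 * ((Ssum (i:ℕ) ((j:ℕ):ℤ) : ℤ) : ℝ)
            + ((Tsum (i:ℕ) ((j:ℕ):ℤ) : ℤ) : ℝ)) := by
      have step1 : ∑ k ∈ Finset.range ((i:ℕ)+1),
            (-1:ℝ)^((i:ℕ)+k) * (ell (i:ℕ) k : ℝ)
              * ((bb k ((j:ℕ):ℤ) : ℝ) * x^2 + (bb (k+1) ((j:ℕ):ℤ) : ℝ))
          = ∑ k ∈ Finset.range ((i:ℕ)+1),
            ((-1:ℝ)^((i:ℕ)) * (x^2 * ((-1:ℝ)^k * (ell (i:ℕ) k : ℝ) * (bb k ((j:ℕ):ℤ) : ℝ))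
              + (-1:ℝ)^k * (ell (i:ℕ) k : ℝ) * (bb (k+1) ((j:ℕ):ℤ) : ℝ))) := by
        refine Finset.sum_congr rfl fun k _ => ?_
        rw [pow_add]
        ring
      rw [step1, ← Finset.mul_sum]
      congr 1
      unfold Ssum Tsum
      push_cast
      rw [Finset.sum_add_distrib, ← Finset.mul_sum]
    rw [hexp, Tsum_eq]
    have hu : ((-1:ℝ))^((i:ℕ)) * ((-1:ℝ))^((i:ℕ)) = 1 := by
      rw [← pow_add]
      exact Even.neg_one_pow ⟨(i:ℕ), by ring⟩
    have cast_S : ∀ w : ℤ, ((-1:ℝ))^((i:ℕ)) * ((Ssum (i:ℕ) w : ℤ) : ℝ)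
        = if w = ((i:ℕ):ℤ) ∨ w = -((i:ℕ):ℤ) then 1 else 0 := by
      intro w
      rw [hs, Ssum_eq s w]
      push_cast [hs]
      split_ifs with hcond
      · rw [show ((s:ℤ)+1) = ((s:ℕ):ℤ)+1 by push_cast; ring] at *
        rw [← pow_add]
        exact Even.neg_one_pow ⟨s+1, by ring⟩
      · ring
    have expand : ((-1:ℝ))^((i:ℕ)) * (x^2 * ((Ssum (i:ℕ) ((j:ℕ):ℤ) : ℤ) : ℝ)
            + ((2 * Ssum (i:ℕ) ((j:ℕ):ℤ) + Ssum (i:ℕ) (((j:ℕ):ℤ)-1)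
                + Ssum (i:ℕ) (((j:ℕ):ℤ)+1) : ℤ) : ℝ))
        = x^2 * (if ((j:ℕ):ℤ) = ((i:ℕ):ℤ) ∨ ((j:ℕ):ℤ) = -((i:ℕ):ℤ) then 1 else 0)
          + (2 * (if ((j:ℕ):ℤ) = ((i:ℕ):ℤ) ∨ ((j:ℕ):ℤ) = -((i:ℕ):ℤ) then 1 else 0)
            + (if ((j:ℕ):ℤ)-1 = ((i:ℕ):ℤ) ∨ ((j:ℕ):ℤ)-1 = -((i:ℕ):ℤ) then 1 else 0)
            + (if ((j:ℕ):ℤ)+1 = ((i:ℕ):ℤ) ∨ ((j:ℕ):ℤ)+1 = -((i:ℕ):ℤ) then 1 else 0)) := by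
      rw [← cast_S, ← cast_S, ← cast_S]
      push_cast
      ring
    rw [expand]
    unfold Bmat Bf
    simp only [Matrix.of_apply]
    split_ifs <;> first | ring1 | (exfalso; omega)

lemma Bmat_sub (x : ℝ) (n : ℕ) :
    (Bmat x (n+1)).submatrix Fin.castSucc Fin.castSucc = Bmat x n := by
  ext i j
  simp [Bmat, Matrix.submatrix_apply]

lemma Bf_last (x : ℝ) (n j : ℕ) (hj2 : j + 1 ≠ n + 2) (hj1 : j ≠ n + 2) (hj3 : j ≠ n + 3) :
    Bf x (n+2) j = 0 := by
  unfold Bf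
  rw [if_neg (by omega), if_neg (by omega), if_neg (by omega), if_neg (by omega)]
  norm_num

lemma detB_rec (x : ℝ) (n : ℕ) :
    (Bmat x (n+3)).det = (x^2+2) * (Bmat x (n+2)).det - (Bmat x (n+1)).det := by
  rw [Matrix.det_succ_row (Bmat x (n+3)) (Fin.last (n+2))]
  set jA : Fin (n+3) := ⟨n+1, by omega⟩ with hjA
  set jB : Fin (n+3) := Fin.last (n+2) with hjB
  have hAB : jA ≠ jB := by
    intro h
    have := congrArg Fin.val h
    simp [hjA, hjB] at this
  have hz : ∀ c ∈ Finset.univ, c ∉ ({jA, jB} : Finset (Fin (n+3))) →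
      (-1:ℝ)^((Fin.last (n+2) : ℕ) + (c:ℕ)) * Bmat x (n+3) (Fin.last (n+2)) c
        * (((Bmat x (n+3)).submatrix (Fin.last (n+2)).succAbove c.succAbove).det) = 0 := by
    intro c _ hc
    simp only [Finset.mem_insert, Finset.mem_singleton] at hc
    push_neg at hc
    obtain ⟨h1, h2⟩ := hc
    have hv1 : (c:ℕ) ≠ n+1 := fun hv => h1 (Fin.ext hv)
    have hv2 : (c:ℕ) ≠ n+2 := fun hv => h2 (Fin.ext hv)
    have : Bmat x (n+3) (Fin.last (n+2)) c = 0 := by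
      show Bf x (n+2) (c:ℕ) = 0
      have hlt := c.isLt
      exact Bf_last x n (c:ℕ) (by omega) (by omega) (by omega)
    rw [this]
    ring
  rw [← Finset.sum_subset (Finset.subset_univ {jA, jB}) hz, Finset.sum_pair hAB]
  have hBlast : Bmat x (n+3) (Fin.last (n+2)) jB = x^2 + 2 := by
    show Bf x (n+2) (n+2) = x^2+2
    unfold Bf
    rw [if_pos rfl, if_neg (by omega), if_neg (by omega), if_neg (by omega)]
    ring
  have hBsub : Bmat x (n+3) (Fin.last (n+2)) jA = 1 := by
    show Bf x (n+2) (n+1) = 1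
    unfold Bf
    rw [if_neg (by omega), if_neg (by omega), if_pos (by omega), if_neg (by omega)]
    ring
  have hsignB : (-1:ℝ)^((Fin.last (n+2) : ℕ) + (jB:ℕ)) = 1 :=
    Even.neg_one_pow ⟨n+2, by simp [hjB, Fin.val_last]⟩
  have hsignA : (-1:ℝ)^((Fin.last (n+2) : ℕ) + (jA:ℕ)) = -1 :=
    Odd.neg_one_pow ⟨n+1, by simp [hjA, hjB, Fin.val_last]; ring⟩
  have hminorB : ((Bmat x (n+3)).submatrix (Fin.last (n+2)).succAbove jB.succAbove).det
      = (Bmat x (n+2)).det := by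
    rw [hjB, Fin.succAbove_last, Bmat_sub]
  have hminorA : ((Bmat x (n+3)).submatrix (Fin.last (n+2)).succAbove jA.succAbove).det
      = (Bmat x (n+1)).det := by
    have hvalA : ∀ k : Fin (n+2), ((jA.succAbove k : Fin (n+3)) : ℕ)
        = if (k:ℕ) < n+1 then (k:ℕ) else (k:ℕ)+1 := by
      intro k
      unfold Fin.succAbove
      split_ifs with h1 h2 h3
      · rfl
      · exfalso
        rw [Fin.lt_def] at h1
        simp [hjA] at h1
        omega
      · exfalso
        rw [Fin.lt_def] at h1
        simp [hjA] at h1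
        omega
      · rfl
    rw [Fin.succAbove_last]
    rw [Matrix.det_succ_column _ (Fin.last (n+1))]
    have hz2 : ∀ c ∈ Finset.univ, c ∉ ({Fin.last (n+1)} : Finset (Fin (n+2))) →
        (-1:ℝ)^((c:ℕ) + ((Fin.last (n+1) : Fin (n+2)):ℕ))
          * ((Bmat x (n+3)).submatrix Fin.castSucc jA.succAbove) c (Fin.last (n+1))
          * ((((Bmat x (n+3)).submatrix Fin.castSucc jA.succAbove).submatrix
              c.succAbove (Fin.last (n+1)).succAbove).det) = 0 := by
      intro c _ hc
      simp only [Finset.mem_singleton] at hc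
      have hcv : (c:ℕ) < n+1 := by
        have := c.isLt
        rcases Nat.lt_or_ge (c:ℕ) (n+1) with h | h
        · exact h
        · refine absurd (Fin.ext ?_) hc
          rw [Fin.val_last]
          omega
      have : ((Bmat x (n+3)).submatrix Fin.castSucc jA.succAbove) c (Fin.last (n+1)) = 0 := by
        rw [Matrix.submatrix_apply]
        show Bf x ((Fin.castSucc c : Fin (n+3)):ℕ) ((jA.succAbove (Fin.last (n+1)) : Fin (n+3)):ℕ) = 0
        rw [hvalA (Fin.last (n+1))]
        simp only [Fin.val_last, Fin.coe_castSucc]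
        rw [if_neg (by omega)]
        unfold Bf
        rw [if_neg (by omega), if_neg (by omega), if_neg (by omega), if_neg (by omega)]
        norm_num
      rw [this]
      ring
    rw [← Finset.sum_subset (Finset.subset_univ {Fin.last (n+1)}) hz2, Finset.sum_singleton]
    have hentry : ((Bmat x (n+3)).submatrix Fin.castSucc jA.succAbove)
        (Fin.last (n+1)) (Fin.last (n+1)) = 1 := by
      rw [Matrix.submatrix_apply]
      show Bf x ((Fin.castSucc (Fin.last (n+1)) : Fin (n+3)):ℕ)
        ((jA.succAbove (Fin.last (n+1)) : Fin (n+3)):ℕ) = 1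
      rw [hvalA (Fin.last (n+1))]
      simp only [Fin.val_last, Fin.coe_castSucc]
      rw [if_neg (by omega)]
      unfold Bf
      rw [if_neg (by omega), if_pos (by omega), if_neg (by omega), if_neg (by omega)]
      ring
    have hsign2 : (-1:ℝ)^(((Fin.last (n+1) : Fin (n+2)):ℕ) + ((Fin.last (n+1) : Fin (n+2)):ℕ)) = 1 :=
      Even.neg_one_pow ⟨n+1, by simp [Fin.val_last]⟩
    rw [hentry, hsign2]
    have hfinal : (((Bmat x (n+3)).submatrix Fin.castSucc jA.succAbove).submatrix
        (Fin.last (n+1)).succAbove (Fin.last (n+1)).succAbove) = Bmat x (n+1) := by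
      ext a b
      simp only [Matrix.submatrix_apply, Fin.succAbove_last]
      show Bf x ((Fin.castSucc (Fin.castSucc a) : Fin (n+3)):ℕ)
        ((jA.succAbove (Fin.castSucc b) : Fin (n+3)):ℕ) = Bmat x (n+1) a b
      rw [hvalA (Fin.castSucc b)]
      simp only [Fin.coe_castSucc]
      rw [if_pos (by omega)]
      rfl
    rw [hfinal]
    ring
  rw [hBlast, hBsub, hsignA, hsignB, hminorA, hminorB]
  ring

lemma ell_vals : ell 1 0 = 2 ∧ ell 1 1 = 1 ∧ ell 2 0 = 2 ∧ ell 2 1 = 4 ∧ ell 2 2 = 1 := by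
  refine ⟨?_, ?_, ?_, ?_, ?_⟩ <;> (unfold ell; norm_num)

lemma detB_one (x : ℝ) : (Bmat x 1).det = LL x 1 := by
  rw [Matrix.det_fin_one]
  show Bf x ((0 : Fin 1):ℕ) ((0 : Fin 1):ℕ) = LL x 1
  unfold Bf LL
  rw [Finset.sum_range_succ, Finset.sum_range_one, ell_vals.1, ell_vals.2.1]
  norm_num
  ring

lemma detB_two (x : ℝ) : (Bmat x 2).det = LL x 2 := by
  rw [Matrix.det_fin_two]
  have e00 : Bmat x 2 0 0 = x^2 + 2 := by
    show Bf x ((0 : Fin 2):ℕ) ((0 : Fin 2):ℕ) = x^2+2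
    unfold Bf
    norm_num
  have e01 : Bmat x 2 0 1 = 1 := by
    show Bf x ((0 : Fin 2):ℕ) ((1 : Fin 2):ℕ) = 1
    unfold Bf
    norm_num
  have e10 : Bmat x 2 1 0 = 2 := by
    show Bf x ((1 : Fin 2):ℕ) ((0 : Fin 2):ℕ) = 2
    unfold Bf
    norm_num
  have e11 : Bmat x 2 1 1 = x^2 + 2 := by
    show Bf x ((1 : Fin 2):ℕ) ((1 : Fin 2):ℕ) = x^2+2
    unfold Bf
    norm_num
  rw [e00, e01, e10, e11]
  unfold LL
  rw [Finset.sum_range_succ, Finset.sum_range_succ, Finset.sum_range_one,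
    ell_vals.2.2.1, ell_vals.2.2.2.1, ell_vals.2.2.2.2]
  push_cast
  ring

lemma detB_eq (x : ℝ) : ∀ n, 1 ≤ n → (Bmat x n).det = LL x n := by
  intro n
  induction n using Nat.strong_induction_on with
  | _ n ih =>
    match n with
    | 0 => intro h; exact absurd h (by omega)
    | 1 => intro _; exact detB_one x
    | 2 => intro _; exact detB_two x
    | (q+3) =>
      intro _
      rw [detB_rec, ih (q+2) (by omega) (by omega), ih (q+1) (by omega) (by omega)]
      have h := LL_rec x (q+1)
      rw [show q+1+2 = q+3 by omega, show q+1+1 = q+2 by omega] at h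
      linarith [h]

theorem det_eq_lucas_even (n : ℕ) (hn : 1 ≤ n) (x : ℝ) :
    Matrix.det (Matrix.of fun i j : Fin n =>
        (gchoose (2 * (i : ℤ)) ((i : ℤ) - (j : ℤ)) : ℝ) * x ^ 2 +
        (gchoose (2 * (i : ℤ) + 2) ((i : ℤ) + 1 - (j : ℤ)) : ℝ)) = lucasP (2 * n) x := by
  have h1 : Lmat n * Mmat x n = Bmat x n := prod_eq x n
  have h2 := congrArg Matrix.det h1
  rw [Matrix.det_mul, Lmat_det, one_mul] at h2
  show (Mmat x n).det = lucasP (2*n) x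
  rw [h2, detB_eq x n hn, lucasP_eq_LL n hn]
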